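/- Let C be a nonempty closed convex subset of a real Hilbert space H, let ρ > 0, and define the abstract Huber function h : H → ℝ by h(x) = ρ d_C(x) − ρ²/2 if d_C(x) > ρ and h(x) = d_C(x)²/2 if d_C(x) ≤ ρ. Let γ > 0 and x ∈ H. Then prox_{γh} x = x + (γρ/d_C(x)) (proj_C x − x) if d_C(x) > (γ+1)ρ, and prox_{γh} x = (1/(γ+1)) (x + γ proj_C x) if d_C(x) ≤ (γ+1)ρ. -/

import Mathlib

/-- scalar Huber function -/
noncomputable def huberS (ρ t : ℝ) : ℝ := if ρ < t then ρ * t - ρ ^ 2 / 2 else t ^ 2 / 2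

lemma huberS_mono {ρ : ℝ} (hρ : 0 < ρ) {s t : ℝ} (hs : 0 ≤ s) (hst : s ≤ t) :
    huberS ρ s ≤ huberS ρ t := by
  unfold huberS
  split_ifs <;> nlinarith

lemma huberS_midconvex {ρ : ℝ} (hρ : 0 < ρ) {a b : ℝ} (ha : 0 ≤ a) (hb : 0 ≤ b) :
    huberS ρ ((a + b) / 2) ≤ (huberS ρ a + huberS ρ b) / 2 := by
  unfold huberS
  split_ifs with h1 h2 h3 h4 h5 h6 h7
  · linarith
  · nlinarith [sq_nonneg (b - ρ)]
  · nlinarith [sq_nonneg (a - ρ)]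
  · linarith
  · linarith
  · nlinarith [mul_nonneg (by linarith : (0:ℝ) ≤ 2*ρ - a - b)
      (by linarith : (0:ℝ) ≤ 3*a - b - 2*ρ)]
  · nlinarith [mul_nonneg (by linarith : (0:ℝ) ≤ 2*ρ - a - b)
      (by linarith : (0:ℝ) ≤ 3*b - a - 2*ρ)]
  · nlinarith [sq_nonneg (a - b)]

lemma lbA {γ ρ d t : ℝ} (hγ : 0 < γ) (hρ : 0 < ρ) (hd : (γ + 1) * ρ < d) (ht : 0 ≤ t) :
    γ * ρ * d - γ * (γ + 1) * ρ ^ 2 / 2 ≤ γ * huberS ρ t + (d - t) ^ 2 / 2 := by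
  unfold huberS
  split_ifs with h
  · nlinarith [sq_nonneg (d - t - γ * ρ)]
  · nlinarith [sq_nonneg (d - (γ+1)*ρ), sq_nonneg (ρ - t),
      mul_nonneg (by linarith : (0:ℝ) ≤ ρ - t) (by linarith : (0:ℝ) ≤ d - (γ+1)*ρ),
      mul_pos hγ hρ]

lemma lbB {γ ρ d t : ℝ} (hγ : 0 < γ) (hρ : 0 < ρ) (hd : d ≤ (γ + 1) * ρ) (hd0 : 0 ≤ d)
    (ht : 0 ≤ t) :
    γ * d ^ 2 / (2 * (γ + 1)) ≤ γ * huberS ρ t + (d - t) ^ 2 / 2 := by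
  rw [div_le_iff₀ (by positivity)]
  unfold huberS
  split_ifs with h
  · nlinarith [sq_nonneg ((γ+1)*ρ - d), sq_nonneg (t - ρ),
      mul_nonneg (by linarith : (0:ℝ) ≤ t - ρ) (by linarith : (0:ℝ) ≤ (γ+1)*ρ - d),
      mul_pos hγ hρ, mul_nonneg hγ.le (sq_nonneg (t - ρ)),
      mul_nonneg (mul_nonneg hγ.le hγ.le) (mul_nonneg hρ.le (by linarith : (0:ℝ) ≤ t - ρ))]
  · nlinarith [sq_nonneg ((γ+1)*t - d), mul_nonneg hγ.le (sq_nonneg ((γ+1)*t - d))]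

/-- uniqueness of minimizers of strongly convex functions (midpoint version). -/
lemma unique_min {H : Type*} [NormedAddCommGroup H] [InnerProductSpace ℝ H]
    (f : H → ℝ) (γ : ℝ) (hγ : 0 < γ) (x p q : H)
    (hconv : f ((1/2 : ℝ) • (p + q)) ≤ (f p + f q) / 2)
    (hp : ∀ y, γ * f p + ‖x - p‖ ^ 2 / 2 ≤ γ * f y + ‖x - y‖ ^ 2 / 2)
    (hq : ∀ y, γ * f q + ‖x - q‖ ^ 2 / 2 ≤ γ * f y + ‖x - y‖ ^ 2 / 2) : p = q := by
  set m := (1/2 : ℝ) • (p + q) with hm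
  have hpar : ‖x - m‖ ^ 2 = (‖x - p‖ ^ 2 + ‖x - q‖ ^ 2) / 2 - ‖p - q‖ ^ 2 / 4 := by
    have h1 : x - m = (1/2 : ℝ) • ((x - p) + (x - q)) := by
      rw [hm]; module
    have e1 := norm_add_sq_real (x - p) (x - q)
    have e2 := norm_sub_sq_real (x - p) (x - q)
    have e3 : (x - p) - (x - q) = q - p := by abel
    rw [e3, norm_sub_rev] at e2
    have h2 : ‖x - m‖ ^ 2 = (1/2 : ℝ)^2 * ‖(x - p) + (x - q)‖ ^ 2 := by
      rw [h1, norm_smul, mul_pow]; norm_num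
    rw [h2]; linarith
  have h3 := hp m
  have h4 := hp q
  have h5 := hq p
  have h6 : γ * f m ≤ γ * ((f p + f q) / 2) := mul_le_mul_of_nonneg_left hconv hγ.le
  have h7 : ‖p - q‖ ^ 2 ≤ 0 := by nlinarith
  have h8 : p - q = 0 := by
    have := sq_nonneg ‖p - q‖
    have : ‖p - q‖ ^ 2 = 0 := le_antisymm h7 this
    simpa [pow_eq_zero_iff] using this
  exact sub_eq_zero.mp h8

theorem stmt_9 {H : Type*} [NormedAddCommGroup H] [InnerProductSpace ℝ H] [CompleteSpace H]
    (C : Set H) (hCne : C.Nonempty) (hCclosed : IsClosed C) (hCconv : Convex ℝ C)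
    (ρ : ℝ) (hρ : 0 < ρ)
    (h : H → ℝ)
    (hdef : ∀ x, h x = if ρ < Metric.infDist x C
      then ρ * Metric.infDist x C - ρ ^ 2 / 2 else (Metric.infDist x C) ^ 2 / 2)
    (projC : H → H)
    (hproj : ∀ x, projC x ∈ C ∧ ∀ y ∈ C, dist x (projC x) ≤ dist x y)
    (γ : ℝ) (hγ : 0 < γ) (x : H)
    -- `p = prox_{γh} x` :
    (p : H)
    (hp : ∀ y : H, γ * h p + ‖x - p‖ ^ 2 / 2 ≤ γ * h y + ‖x - y‖ ^ 2 / 2) :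
    ((γ + 1) * ρ < Metric.infDist x C →
      p = x + (γ * ρ / Metric.infDist x C) • (projC x - x)) ∧
    (Metric.infDist x C ≤ (γ + 1) * ρ →
      p = (1 / (γ + 1)) • (x + γ • projC x)) := by
  -- basic facts
  have hhub : ∀ y, h y = huberS ρ (Metric.infDist y C) := fun y => by rw [hdef y]; rfl
  -- infDist equals dist to projection
  have hproj_eq : ∀ y : H, Metric.infDist y C = ‖y - projC y‖ := by
    intro y
    rw [← dist_eq_norm]
    refine le_antisymm (Metric.infDist_le_dist_of_mem (hproj y).1) ?_
    by_contra hlt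
    push_neg at hlt
    obtain ⟨c, hc, hcd⟩ := (Metric.infDist_lt_iff hCne).mp hlt
    exact absurd ((hproj y).2 c hc) (not_le.mpr hcd)
  -- midpoint convexity of h
  have hconv : ∀ a b : H, h ((1/2 : ℝ) • (a + b)) ≤ (h a + h b) / 2 := by
    intro a b
    set m := (1/2 : ℝ) • (a + b)
    have hmid : Metric.infDist m C ≤ (Metric.infDist a C + Metric.infDist b C) / 2 := by
      have hmem : (1/2 : ℝ) • projC a + (1/2 : ℝ) • projC b ∈ C :=
        hCconv (hproj a).1 (hproj b).1 (by norm_num) (by norm_num) (by norm_num)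
      have h1 : Metric.infDist m C ≤ dist m ((1/2 : ℝ) • projC a + (1/2 : ℝ) • projC b) :=
        Metric.infDist_le_dist_of_mem hmem
      have h2 : m - ((1/2 : ℝ) • projC a + (1/2 : ℝ) • projC b)
          = (1/2 : ℝ) • ((a - projC a) + (b - projC b)) := by
        simp only [m]; module
      have h3 : dist m ((1/2 : ℝ) • projC a + (1/2 : ℝ) • projC b)
          ≤ (‖a - projC a‖ + ‖b - projC b‖) / 2 := by
        rw [dist_eq_norm, h2, norm_smul]
        have := norm_add_le (a - projC a) (b - projC b)
        simp only [Real.norm_eq_abs]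
        rw [abs_of_pos (by norm_num : (0:ℝ) < 1/2)]
        linarith
      rw [hproj_eq a, hproj_eq b]
      linarith
    rw [hhub, hhub, hhub]
    calc huberS ρ (Metric.infDist m C)
        ≤ huberS ρ ((Metric.infDist a C + Metric.infDist b C) / 2) :=
          huberS_mono hρ Metric.infDist_nonneg hmid
      _ ≤ (huberS ρ (Metric.infDist a C) + huberS ρ (Metric.infDist b C)) / 2 :=
          huberS_midconvex hρ Metric.infDist_nonneg Metric.infDist_nonneg
  set d := Metric.infDist x C with hd_def
  have hd0 : 0 ≤ d := Metric.infDist_nonneg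
  have hdP : d = ‖x - projC x‖ := hproj_eq x
  -- lower bound on ‖x - y‖² in terms of infDist
  have hlow : ∀ y : H, (d - Metric.infDist y C) ^ 2 ≤ ‖x - y‖ ^ 2 := by
    intro y
    have h1 : d ≤ Metric.infDist y C + dist x y := Metric.infDist_le_infDist_add_dist
    have h2 : Metric.infDist y C ≤ d + dist y x := Metric.infDist_le_infDist_add_dist
    rw [dist_comm] at h2
    rw [← dist_eq_norm]
    exact sq_le_sq' (by linarith) (by linarith)
  constructor
  · -- Case A
    intro hd
    have hdpos : 0 < d := lt_trans (by positivity) hd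
    set s : ℝ := γ * ρ / d with hs_def
    have hsd : s * d = γ * ρ := div_mul_cancel₀ _ (ne_of_gt hdpos)
    have hs0 : 0 < s := by positivity
    have hs1 : s < 1 := by
      rw [div_lt_one hdpos]; nlinarith
    set q : H := x + s • (projC x - x) with hq_def
    have hxq : ‖x - q‖ = γ * ρ := by
      have h1 : x - q = s • (x - projC x) := by rw [hq_def]; module
      rw [h1, norm_smul, Real.norm_eq_abs, abs_of_pos hs0, ← hdP, hsd]
    have hqP : ‖q - projC x‖ = d - γ * ρ := by
      have h1 : q - projC x = (1 - s) • (x - projC x) := by rw [hq_def]; module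
      rw [h1, norm_smul, Real.norm_eq_abs, abs_of_pos (by linarith), ← hdP]
      linear_combination -hsd
    have hdq : Metric.infDist q C = d - γ * ρ := by
      refine le_antisymm ?_ ?_
      · calc Metric.infDist q C ≤ dist q (projC x) := Metric.infDist_le_dist_of_mem (hproj x).1
          _ = d - γ * ρ := by rw [dist_eq_norm, hqP]
      · have h1 : d ≤ Metric.infDist q C + dist x q := Metric.infDist_le_infDist_add_dist
        rw [dist_eq_norm, hxq] at h1
        linarith
    have hhq : h q = ρ * (d - γ * ρ) - ρ ^ 2 / 2 := by
      rw [hdef q, hdq, if_pos (by nlinarith)]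
    have hfq : ∀ y : H, γ * h q + ‖x - q‖ ^ 2 / 2 ≤ γ * h y + ‖x - y‖ ^ 2 / 2 := by
      intro y
      have h1 : γ * ρ * d - γ * (γ + 1) * ρ ^ 2 / 2
          ≤ γ * huberS ρ (Metric.infDist y C) + (d - Metric.infDist y C) ^ 2 / 2 :=
        lbA hγ hρ hd Metric.infDist_nonneg
      have h2 := hlow y
      rw [hhq, hxq, hhub y]
      nlinarith
    exact unique_min h γ hγ x p q (hconv p q) hp hfq
  · -- Case B
    intro hd
    have hg1 : (0:ℝ) < γ + 1 := by linarith
    set q : H := (1 / (γ + 1)) • (x + γ • projC x) with hq_def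
    have hxq : ‖x - q‖ = γ / (γ + 1) * d := by
      have h1 : x - q = (γ / (γ + 1)) • (x - projC x) := by
        rw [hq_def]
        rw [div_eq_mul_inv, div_eq_mul_inv, one_mul]
        match_scalars <;> field_simp <;> ring
      rw [h1, norm_smul, Real.norm_eq_abs, abs_of_pos (by positivity), ← hdP]
    have hqP : ‖q - projC x‖ = d / (γ + 1) := by
      have h1 : q - projC x = (1 / (γ + 1)) • (x - projC x) := by
        rw [hq_def]
        rw [div_eq_mul_inv, one_mul]
        match_scalars <;> field_simp <;> ring
      rw [h1, norm_smul, Real.norm_eq_abs, abs_of_pos (by positivity), ← hdP]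
      ring
    have hdq : Metric.infDist q C = d / (γ + 1) := by
      refine le_antisymm ?_ ?_
      · calc Metric.infDist q C ≤ dist q (projC x) := Metric.infDist_le_dist_of_mem (hproj x).1
          _ = d / (γ + 1) := by rw [dist_eq_norm, hqP]
      · have h1 : d ≤ Metric.infDist q C + dist x q := Metric.infDist_le_infDist_add_dist
        rw [dist_eq_norm, hxq] at h1
        have : γ / (γ + 1) * d + d / (γ + 1) = d := by field_simp
        linarith
    have hhq : h q = (d / (γ + 1)) ^ 2 / 2 := by
      rw [hdef q, hdq, if_neg]
      push_neg
      rw [div_le_iff₀ hg1]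
      linarith
    have hfqval : γ * h q + ‖x - q‖ ^ 2 / 2 = γ * d ^ 2 / (2 * (γ + 1)) := by
      rw [hhq, hxq]
      field_simp
      ring
    have hfq : ∀ y : H, γ * h q + ‖x - q‖ ^ 2 / 2 ≤ γ * h y + ‖x - y‖ ^ 2 / 2 := by
      intro y
      have h1 : γ * d ^ 2 / (2 * (γ + 1))
          ≤ γ * huberS ρ (Metric.infDist y C) + (d - Metric.infDist y C) ^ 2 / 2 :=
        lbB hγ hρ hd hd0 Metric.infDist_nonneg
      have h2 := hlow y
      rw [hfqval, hhub y]
      nlinarith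
    exact unique_min h γ hγ x p q (hconv p q) hp hfq
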